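/- Let A be a Hermitian unital complex *-algebra. Then every selfadjoint element a ∈ A is the inverse Cayley transform of a unitary element: there exists g ∈ unitary A such that 1 - g is invertible in A and a = i · (1 - g)⁻¹ * (1 + g). -/

import Mathlib

/-- In a Hermitian unital complex *-algebra, every selfadjoint element is the
inverse Cayley transform of a unitary element. -/
theorem stmt14 {A : Type*} [Ring A] [Algebra ℂ A] [StarRing A] [StarModule ℂ A]
    (hHerm : ∀ a : A, star a = a → ∀ z ∈ spectrum ℂ a, z.im = 0)
    (a : A) (hsa : star a = a) :
    ∃ g ∈ unitary A, IsUnit (1 - g) ∧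
      a = algebraMap ℂ A Complex.I * Ring.inverse (1 - g) * (1 + g) := by
  set I : A := algebraMap ℂ A Complex.I with hIdef
  have hstarI : star I = -I := by
    rw [hIdef, ← algebraMap_star_comm, Complex.star_def, Complex.conj_I, map_neg]
  -- spectrum facts
  have hsp : ∀ z : ℂ, z.im ≠ 0 → IsUnit (algebraMap ℂ A z - a) := by
    intro z hz
    by_contra h
    exact hz (hHerm a hsa z ((spectrum.mem_iff).mpr h))
  have hu' : IsUnit (a + I) := by
    have := hsp (-Complex.I) (by simp)
    rw [map_neg, ← hIdef] at this
    have h2 : -I - a = -(a + I) := by abel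
    rw [h2] at this
    simpa using this.neg
  have hv' : IsUnit (a - I) := by
    have := hsp Complex.I (by simp)
    rw [← hIdef] at this
    have h2 : I - a = -(a - I) := by abel
    rw [h2] at this
    simpa using this.neg
  obtain ⟨u, hu⟩ := hu'
  obtain ⟨v, hv⟩ := hv'
  have hIa : Commute I a := Algebra.commutes Complex.I a
  have hcomm : Commute ((u : A)) ((v : A)) := by
    rw [hu, hv]
    exact ((Commute.refl a).add_left hIa).sub_right ((hIa.symm).add_left (Commute.refl I))
  have hsu : star ((u : A)) = (v : A) := by
    rw [hu, hv, star_add, hsa, hstarI, ← sub_eq_add_neg]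
  have hsv : star ((v : A)) = (u : A) := by
    rw [hu, hv, star_sub, hsa, hstarI, sub_neg_eq_add]
  have hsuinv : star ((u⁻¹ : Aˣ) : A) = ((v⁻¹ : Aˣ) : A) := by
    have h1 : (v : A) * star ((u⁻¹ : Aˣ) : A) = 1 := by
      rw [← hsu, ← star_mul, Units.inv_mul, star_one]
    calc star ((u⁻¹ : Aˣ) : A) = ((v⁻¹ : Aˣ) : A) * ((v : A) * star ((u⁻¹ : Aˣ) : A)) := by
          rw [← mul_assoc, Units.inv_mul, one_mul]
      _ = ((v⁻¹ : Aˣ) : A) := by rw [h1, mul_one]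
  have hc : (2 * Complex.I) ≠ 0 := by simp
  obtain ⟨w, hw⟩ : IsUnit (algebraMap ℂ A (2 * Complex.I)) :=
    (isUnit_iff_ne_zero.mpr hc).map (algebraMap ℂ A)
  have huv : (u : A) - (v : A) = (w : A) := by
    rw [hu, hv, hw, two_mul, map_add, ← hIdef]
    abel
  have h1g : (1 : A) - (v : A) * ((u⁻¹ : Aˣ) : A) = (w : A) * ((u⁻¹ : Aˣ) : A) := by
    calc (1 : A) - (v : A) * ((u⁻¹ : Aˣ) : A)
        = ((u : A) - (v : A)) * ((u⁻¹ : Aˣ) : A) := by rw [sub_mul, Units.mul_inv]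
      _ = (w : A) * ((u⁻¹ : Aˣ) : A) := by rw [huv]
  set S : A := algebraMap ℂ A ((2 * Complex.I)⁻¹) with hSdef
  have hwinv : ((w⁻¹ : Aˣ) : A) = S := by
    have h1 : (w : A) * S = 1 := by
      rw [hw, hSdef, ← map_mul, mul_inv_cancel₀ hc, map_one]
    calc ((w⁻¹ : Aˣ) : A) = ((w⁻¹ : Aˣ) : A) * ((w : A) * S) := by rw [h1, mul_one]
      _ = S := by rw [← mul_assoc, Units.inv_mul, one_mul]
  have hinv : Ring.inverse ((1 : A) - (v : A) * ((u⁻¹ : Aˣ) : A)) = (u : A) * S := by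
    rw [h1g, ← Units.val_mul, Ring.inverse_unit, mul_inv_rev, inv_inv, Units.val_mul, hwinv]
  have hplus : (1 : A) + (v : A) * ((u⁻¹ : Aˣ) : A) = (a + a) * ((u⁻¹ : Aˣ) : A) := by
    calc (1 : A) + (v : A) * ((u⁻¹ : Aˣ) : A)
        = ((u : A) + (v : A)) * ((u⁻¹ : Aˣ) : A) := by rw [add_mul, Units.mul_inv]
      _ = (a + a) * ((u⁻¹ : Aˣ) : A) := by rw [hu, hv]; abel_nf
  have hau : Commute ((u : A)) a := by
    rw [hu]; exact (Commute.refl a).add_left hIa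
  have hS : ∀ x : A, S * x = x * S := fun x => Algebra.commutes _ x
  have key : I * ((u : A) * S) * ((a + a) * ((u⁻¹ : Aˣ) : A)) = a := by
    have h1 : (u : A) * ((a + a) * ((u⁻¹ : Aˣ) : A)) = a + a := by
      rw [← mul_assoc, (hau.add_right hau).eq, mul_assoc, Units.mul_inv, mul_one]
    have h2 : I * S = algebraMap ℂ A 2⁻¹ := by
      rw [hIdef, hSdef, ← map_mul]
      congr 1
      field_simp
    have h3 : algebraMap ℂ A (2⁻¹ : ℂ) * (a + a) = a := by
      rw [← Algebra.smul_def, smul_add, ← add_smul]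
      norm_num
    calc I * ((u : A) * S) * ((a + a) * ((u⁻¹ : Aˣ) : A))
        = I * S * ((u : A) * ((a + a) * ((u⁻¹ : Aˣ) : A))) := by
          rw [← hS, ← mul_assoc I S, mul_assoc (I * S)]
      _ = a := by rw [h1, h2, h3]
  refine ⟨(v : A) * ((u⁻¹ : Aˣ) : A), ⟨?_, ?_⟩, ?_, ?_⟩
  · -- star g * g = 1
    rw [star_mul, hsv, hsuinv]
    calc ((v⁻¹ : Aˣ) : A) * (u : A) * ((v : A) * ((u⁻¹ : Aˣ) : A))
        = ((v⁻¹ : Aˣ) : A) * ((u : A) * (v : A)) * ((u⁻¹ : Aˣ) : A) := by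
          rw [mul_assoc, mul_assoc, mul_assoc]
      _ = ((v⁻¹ : Aˣ) : A) * ((v : A) * (u : A)) * ((u⁻¹ : Aˣ) : A) := by rw [hcomm]
      _ = 1 := by rw [← mul_assoc, Units.inv_mul, one_mul, Units.mul_inv]
  · -- g * star g = 1
    rw [star_mul, hsv, hsuinv]
    have hc2 : Commute ((u⁻¹ : Aˣ) : A) ((v⁻¹ : Aˣ) : A) :=
      (hcomm.units_inv_left).units_inv_right
    calc (v : A) * ((u⁻¹ : Aˣ) : A) * (((v⁻¹ : Aˣ) : A) * (u : A))
        = (v : A) * (((u⁻¹ : Aˣ) : A) * ((v⁻¹ : Aˣ) : A)) * (u : A) := by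
          rw [mul_assoc, mul_assoc, mul_assoc]
      _ = (v : A) * (((v⁻¹ : Aˣ) : A) * ((u⁻¹ : Aˣ) : A)) * (u : A) := by rw [hc2]
      _ = 1 := by rw [← mul_assoc, Units.mul_inv, one_mul, Units.inv_mul]
  · -- IsUnit (1 - g)
    rw [h1g]
    exact ⟨w * u⁻¹, rfl⟩
  · -- the Cayley formula
    rw [hinv, hplus]
    exact key.symm
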